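/- arXiv:0712.3856 — 2 statements merged into one kernel-verified Lean document; each statement's English description precedes it below -/
import Mathlib

section
/- For a, b > 0, the function k(x) = F(a, b; a+b; 1 - e^{-x}) is increasing and convex on (0, ∞), and k' maps (0,∞) onto the interval (ab/(a+b), Γ(a+b)/(Γ(a)Γ(b))). -/
open Real Set Polynomial Filter Topology

/-- The Gaussian hypergeometric function ₂F₁(a,b;c;x) as a power series sum. -/
noncomputable def hyperF (a b c x : ℝ) : ℝ :=
  ∑' n : ℕ, Polynomial.eval a (ascPochhammer ℝ n) * Polynomial.eval b (ascPochhammer ℝ n) /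
      (Polynomial.eval c (ascPochhammer ℝ n) * (n.factorial : ℝ)) * x ^ n

namespace HyperFAux

variable (a b : ℝ)

/-- The Taylor coefficients of `F(a,b;a+b;·)`. -/
noncomputable def cc (n : ℕ) : ℝ :=
  Polynomial.eval a (ascPochhammer ℝ n) * Polynomial.eval b (ascPochhammer ℝ n) /
      (Polynomial.eval (a + b) (ascPochhammer ℝ n) * (n.factorial : ℝ))

/-- The Taylor coefficients of `(1-t)·F'(a,b;a+b;t)`. -/
noncomputable def ee (n : ℕ) : ℝ := (n + 1) * cc a b (n + 1) - n * cc a b n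

/-- The limit value `Γ(a+b)/(Γ(a)Γ(b))`. -/
noncomputable def LL : ℝ := Real.Gamma (a + b) / (Real.Gamma a * Real.Gamma b)

variable {a b} (ha : 0 < a) (hb : 0 < b)

lemma poch_pos {x : ℝ} (hx : 0 < x) (n : ℕ) : 0 < Polynomial.eval x (ascPochhammer ℝ n) := by
  induction n with
  | zero => simp
  | succ n ih => rw [ascPochhammer_succ_eval]; positivity

lemma poch_prod (x : ℝ) (n : ℕ) :
    Polynomial.eval x (ascPochhammer ℝ n) = ∏ j ∈ Finset.range n, (x + j) := by
  induction n with
  | zero => simp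
  | succ n ih => rw [ascPochhammer_succ_eval, ih, Finset.prod_range_succ]

lemma gammaSeq_eq_poch (s : ℝ) (m : ℕ) :
    Real.GammaSeq s m = (m:ℝ) ^ s * m.factorial / Polynomial.eval s (ascPochhammer ℝ (m+1)) := by
  rw [Real.GammaSeq, poch_prod]

omit ha hb in
lemma cc_zero : cc a b 0 = 1 := by simp [cc]

omit ha hb in
lemma cc_one : cc a b 1 = a * b / (a + b) := by
  simp [cc, ascPochhammer_one]

include ha hb

lemma cc_pos (n : ℕ) : 0 < cc a b n := by
  have h1 := poch_pos ha n
  have h2 := poch_pos hb n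
  have h3 := poch_pos (by linarith : (0:ℝ) < a + b) n
  have h4 : (0:ℝ) < n.factorial := by positivity
  unfold cc; positivity

lemma cc_succ (n : ℕ) :
    cc a b (n + 1) = cc a b n * ((a + n) * (b + n) / ((a + b + n) * (n + 1))) := by
  have h3 := poch_pos (by linarith : (0:ℝ) < a + b) n
  have h4 : (0:ℝ) < n.factorial := by positivity
  have h5 : (0:ℝ) < a + b + n := by positivity
  unfold cc
  rw [ascPochhammer_succ_eval, ascPochhammer_succ_eval, ascPochhammer_succ_eval,
    Nat.factorial_succ]
  push_cast
  field_simp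

lemma ee_eq (n : ℕ) : ee a b n = a * b * cc a b n / (a + b + n) := by
  have h5 : (0:ℝ) < a + b + n := by positivity
  unfold ee
  rw [cc_succ ha hb]
  have hn1 : ((n:ℝ) + 1) ≠ 0 := by positivity
  field_simp
  ring

lemma ee_pos (n : ℕ) : 0 < ee a b n := by
  rw [ee_eq ha hb]
  have := cc_pos ha hb n
  have h5 : (0:ℝ) < a + b + n := by positivity
  positivity

lemma ee_zero : ee a b 0 = a * b / (a + b) := by
  have := cc_one (a := a) (b := b)
  simp [ee, this]

omit ha hb in
lemma sum_range_ee (N : ℕ) : ∑ n ∈ Finset.range N, ee a b n = N * cc a b N := by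
  have := Finset.sum_range_sub (fun n : ℕ => (n : ℝ) * cc a b n) N
  simpa [ee] using this

lemma cc_succ_gammaSeq (m : ℕ) (hm : 1 ≤ m) :
    ((m:ℝ)+1) * cc a b (m+1) =
      Real.GammaSeq (a+b) m / (Real.GammaSeq a m * Real.GammaSeq b m) := by
  have hm0 : (0:ℝ) < m := by exact_mod_cast hm
  have hPa := poch_pos ha (m+1)
  have hPb := poch_pos hb (m+1)
  have hPab := poch_pos (by linarith : (0:ℝ) < a + b) (m+1)
  have hfac : (0:ℝ) < m.factorial := by positivity
  have hma : (0:ℝ) < (m:ℝ) ^ a := Real.rpow_pos_of_pos hm0 a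
  have hmb : (0:ℝ) < (m:ℝ) ^ b := Real.rpow_pos_of_pos hm0 b
  have hab : (m:ℝ) ^ (a+b) = (m:ℝ) ^ a * (m:ℝ) ^ b := Real.rpow_add hm0 a b
  rw [cc, gammaSeq_eq_poch, gammaSeq_eq_poch, gammaSeq_eq_poch, Nat.factorial_succ, hab]
  push_cast
  field_simp

lemma LL_pos : 0 < LL a b := by
  have h1 := Real.Gamma_pos_of_pos ha
  have h2 := Real.Gamma_pos_of_pos hb
  have h3 := Real.Gamma_pos_of_pos (by linarith : (0:ℝ) < a + b)
  unfold LL; positivity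

lemma tendsto_n_cc :
    Tendsto (fun N : ℕ => (N:ℝ) * cc a b N) atTop (𝓝 (LL a b)) := by
  have hga := Real.Gamma_pos_of_pos ha
  have hgb := Real.Gamma_pos_of_pos hb
  have hne : Real.Gamma a * Real.Gamma b ≠ 0 := by positivity
  have h1 : Tendsto (fun m : ℕ => Real.GammaSeq (a+b) m / (Real.GammaSeq a m * Real.GammaSeq b m))
      atTop (𝓝 (LL a b)) :=
    (Real.GammaSeq_tendsto_Gamma (a+b)).div
      ((Real.GammaSeq_tendsto_Gamma a).mul (Real.GammaSeq_tendsto_Gamma b)) hne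
  rw [← tendsto_add_atTop_iff_nat 1]
  apply h1.congr'
  filter_upwards [eventually_ge_atTop 1] with m hm
  rw [← cc_succ_gammaSeq ha hb m hm]
  push_cast
  ring_nf

lemma tendsto_sum_ee :
    Tendsto (fun N : ℕ => ∑ n ∈ Finset.range N, ee a b n) atTop (𝓝 (LL a b)) := by
  simpa only [sum_range_ee] using tendsto_n_cc ha hb

lemma hasSum_ee : HasSum (ee a b) (LL a b) :=
  (hasSum_iff_tendsto_nat_of_nonneg (fun n => (ee_pos ha hb n).le) _).2 (tendsto_sum_ee ha hb)

lemma n_cc_le (n : ℕ) : (n:ℝ) * cc a b n ≤ LL a b := by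
  rw [← sum_range_ee]
  exact (Summable.sum_le_tsum (Finset.range n) (fun i _ => (ee_pos ha hb i).le)
    (hasSum_ee ha hb).summable).trans_eq (hasSum_ee ha hb).tsum_eq

omit ha hb in
lemma summable_shift {r : ℝ} (h0 : 0 ≤ r) (h1 : r < 1) (C : ℝ) :
    Summable (fun n : ℕ => C * r^(n-1)) := by
  rw [← summable_nat_add_iff 1]
  simpa using (summable_geometric_of_lt_one h0 h1).mul_left C

lemma S1 {t : ℝ} (ht : |t| < 1) :
    Summable (fun n : ℕ => cc a b n * ((n:ℝ) * t^(n-1))) := by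
  apply Summable.of_norm_bounded (g := fun n => LL a b * |t|^(n-1))
    (summable_shift (abs_nonneg t) ht (LL a b))
  intro n
  have h1 : ‖cc a b n * ((n:ℝ) * t^(n-1))‖ = (n:ℝ) * cc a b n * |t|^(n-1) := by
    rw [norm_mul, norm_mul, norm_pow, Real.norm_eq_abs, Real.norm_eq_abs, Real.norm_eq_abs,
      abs_of_pos (cc_pos ha hb n), Nat.abs_cast]
    ring
  rw [h1]
  exact mul_le_mul_of_nonneg_right (n_cc_le ha hb n) (by positivity)

lemma S2 {t : ℝ} (ht : |t| < 1) :
    Summable (fun n : ℕ => ((n:ℝ)+1) * cc a b (n+1) * t^n) := by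
  apply Summable.of_norm_bounded (g := fun n => LL a b * |t|^n)
    ((summable_geometric_of_lt_one (abs_nonneg t) ht).mul_left (LL a b))
  intro n
  have hsucc : ((n:ℝ)+1) * cc a b (n+1) ≤ LL a b := by
    have := n_cc_le ha hb (n+1); push_cast at this; linarith
  have h1 : ‖((n:ℝ)+1) * cc a b (n+1) * t^n‖ = ((n:ℝ)+1) * cc a b (n+1) * |t|^n := by
    rw [norm_mul, norm_mul, norm_pow, Real.norm_eq_abs, Real.norm_eq_abs, Real.norm_eq_abs,
      abs_of_pos (cc_pos ha hb (n+1)), abs_of_nonneg (by positivity : (0:ℝ) ≤ (n:ℝ)+1)]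
  rw [h1]
  exact mul_le_mul_of_nonneg_right hsucc (by positivity)

lemma deriv_mul_eq {t : ℝ} (ht : |t| < 1) :
    (∑' n : ℕ, cc a b n * ((n:ℝ) * t^(n-1))) * (1 - t) = ∑' n : ℕ, ee a b n * t^n := by
  have hS1 := S1 ha hb ht
  have hS2 := S2 ha hb ht
  set w : ℕ → ℝ := fun n => (n:ℝ) * cc a b n * t^n with hw
  have hSw : Summable w := by
    rw [← summable_nat_add_iff 1]
    apply (hS2.mul_left t).congr
    intro n
    simp only [hw]
    push_cast
    ring
  have hA : ∑' n : ℕ, cc a b n * ((n:ℝ) * t^(n-1))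
      = ∑' n : ℕ, ((n:ℝ)+1) * cc a b (n+1) * t^n := by
    rw [Summable.tsum_eq_zero_add hS1]
    simp only [Nat.cast_zero, zero_mul, mul_zero, zero_add, Nat.add_sub_cancel]
    exact tsum_congr fun n => by push_cast; ring
  have hB : ∑' n : ℕ, w n = t * ∑' n : ℕ, ((n:ℝ)+1) * cc a b (n+1) * t^n := by
    rw [← tsum_mul_left, Summable.tsum_eq_zero_add hSw]
    simp only [hw, Nat.cast_zero, zero_mul, zero_add]
    exact tsum_congr fun n => by push_cast; ring
  rw [hA, mul_sub, mul_one, mul_comm _ t, ← hB, ← Summable.tsum_sub hS2 hSw]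
  exact tsum_congr fun n => by simp only [hw, ee]; push_cast; ring

lemma hasDerivAt_series {t₀ : ℝ} (ht₀ : |t₀| < 1) :
    HasDerivAt (fun y : ℝ => ∑' n : ℕ, cc a b n * y ^ n)
      (∑' n : ℕ, cc a b n * ((n:ℝ) * t₀^(n-1))) t₀ := by
  set r : ℝ := (1 + |t₀|) / 2 with hr
  have hr0 : 0 < r := by positivity
  have hr1 : r < 1 := by rw [hr]; linarith
  have ht₀r : |t₀| < r := by rw [hr]; linarith
  apply hasDerivAt_tsum_of_isPreconnected
    (u := fun n : ℕ => LL a b * r^(n-1))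
    (g' := fun (n : ℕ) (y : ℝ) => cc a b n * ((n:ℝ) * y^(n-1)))
    (y₀ := 0)
    (summable_shift hr0.le hr1 (LL a b)) isOpen_Ioo (convex_Ioo (-r) r).isPreconnected
  · intro n y _
    exact (hasDerivAt_pow n y).const_mul (cc a b n)
  · intro n y hy
    have hyr : |y| ≤ r := by
      rw [abs_le]; exact ⟨hy.1.le, hy.2.le⟩
    have h1 : ‖cc a b n * ((n:ℝ) * y^(n-1))‖ = (n:ℝ) * cc a b n * |y|^(n-1) := by
      rw [norm_mul, norm_mul, norm_pow, Real.norm_eq_abs, Real.norm_eq_abs, Real.norm_eq_abs,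
        abs_of_pos (cc_pos ha hb n), Nat.abs_cast]
      ring
    rw [h1]
    calc (n:ℝ) * cc a b n * |y|^(n-1) ≤ LL a b * |y|^(n-1) :=
          mul_le_mul_of_nonneg_right (n_cc_le ha hb n) (by positivity)
      _ ≤ LL a b * r^(n-1) := by
          exact mul_le_mul_of_nonneg_left (pow_le_pow_left₀ (abs_nonneg y) hyr _)
            (LL_pos ha hb).le
  · rw [mem_Ioo]; constructor <;> linarith
  · apply summable_of_ne_finset_zero (s := {0})
    intro n hn
    have hne : n ≠ 0 := by simpa using hn
    simp [zero_pow hne]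
  · rw [mem_Ioo, ← abs_lt]; exact ht₀r

lemma Sg {t : ℝ} (ht : |t| ≤ 1) : Summable (fun n : ℕ => ee a b n * t^n) := by
  apply Summable.of_norm_bounded (g := ee a b) (hasSum_ee ha hb).summable
  intro n
  rw [norm_mul, norm_pow, Real.norm_eq_abs, Real.norm_eq_abs, abs_of_pos (ee_pos ha hb n)]
  calc ee a b n * |t|^n ≤ ee a b n * 1 := by
        exact mul_le_mul_of_nonneg_left (pow_le_one₀ (abs_nonneg t) ht) (ee_pos ha hb n).le
    _ = ee a b n := mul_one _

lemma gg_strictMono {t₁ t₂ : ℝ} (h0 : 0 ≤ t₁) (h12 : t₁ < t₂) (h21 : t₂ ≤ 1) :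
    ∑' n : ℕ, ee a b n * t₁^n < ∑' n : ℕ, ee a b n * t₂^n := by
  have h20 : 0 ≤ t₂ := le_of_lt (h0.trans_lt h12)
  apply Summable.tsum_lt_tsum_of_nonneg (i := 1)
  · intro n; exact mul_nonneg (ee_pos ha hb n).le (pow_nonneg h0 n)
  · intro n
    exact mul_le_mul_of_nonneg_left (pow_le_pow_left₀ h0 h12.le n) (ee_pos ha hb n).le
  · simpa using (mul_lt_mul_of_pos_left (by simpa using h12) (ee_pos ha hb 1))
  · exact Sg ha hb (by rw [abs_of_nonneg h20]; exact h21)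

lemma gg_lt_LL {t : ℝ} (h0 : 0 ≤ t) (h1 : t < 1) :
    ∑' n : ℕ, ee a b n * t^n < LL a b := by
  rw [← (hasSum_ee ha hb).tsum_eq]
  apply Summable.tsum_lt_tsum_of_nonneg (i := 1)
  · intro n; exact mul_nonneg (ee_pos ha hb n).le (pow_nonneg h0 n)
  · intro n
    calc ee a b n * t^n ≤ ee a b n * 1 :=
          mul_le_mul_of_nonneg_left (pow_le_one₀ h0 h1.le) (ee_pos ha hb n).le
      _ = ee a b n := mul_one _
  · simpa using (mul_lt_mul_of_pos_left h1 (ee_pos ha hb 1))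
  · exact (hasSum_ee ha hb).summable

lemma gg_ge {t : ℝ} (h0 : 0 ≤ t) (h1 : t ≤ 1) :
    ee a b 0 ≤ ∑' n : ℕ, ee a b n * t^n := by
  have := Summable.le_tsum (Sg ha hb (by rw [abs_of_nonneg h0]; exact h1)) 0
    (fun i _ => mul_nonneg (ee_pos ha hb i).le (pow_nonneg h0 i))
  simpa using this

omit ha hb in
lemma gg_zero : ∑' n : ℕ, ee a b n * (0:ℝ)^n = ee a b 0 := by
  rw [tsum_eq_single 0]
  · simp
  · intro n hn
    simp [zero_pow hn]

lemma gg_lower (N : ℕ) {t : ℝ} (h0 : 0 ≤ t) (h1 : t ≤ 1) :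
    (∑ n ∈ Finset.range N, ee a b n) * t^N ≤ ∑' n : ℕ, ee a b n * t^n := by
  rw [Finset.sum_mul]
  calc ∑ n ∈ Finset.range N, ee a b n * t^N
      ≤ ∑ n ∈ Finset.range N, ee a b n * t^n := by
        apply Finset.sum_le_sum
        intro n hn
        exact mul_le_mul_of_nonneg_left
          (pow_le_pow_of_le_one h0 h1 (Finset.mem_range.1 hn).le) (ee_pos ha hb n).le
    _ ≤ ∑' n : ℕ, ee a b n * t^n :=
        Summable.sum_le_tsum (Finset.range N)
          (fun i _ => mul_nonneg (ee_pos ha hb i).le (pow_nonneg h0 i))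
          (Sg ha hb (by rw [abs_of_nonneg h0]; exact h1))

lemma gg_continuousAt {t : ℝ} (ht : |t| < 1) :
    ContinuousAt (fun s : ℝ => ∑' n : ℕ, ee a b n * s^n) t := by
  set r : ℝ := (1 + |t|) / 2 with hr
  have hr0 : 0 < r := by positivity
  have hr1 : r < 1 := by rw [hr]; linarith
  have htr : |t| < r := by rw [hr]; linarith
  have hcont : ContinuousOn (fun s : ℝ => ∑' n : ℕ, ee a b n * s^n) (Ioo (-r) r) := by
    apply continuousOn_tsum (u := fun n => ee a b n * r^n)
    · intro n; exact (continuous_const.mul (continuous_pow n)).continuousOn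
    · apply Summable.of_norm_bounded (g := ee a b) (hasSum_ee ha hb).summable
      intro n
      rw [Real.norm_eq_abs, abs_of_nonneg (mul_nonneg (ee_pos ha hb n).le (pow_nonneg hr0.le n))]
      calc ee a b n * r^n ≤ ee a b n * 1 :=
            mul_le_mul_of_nonneg_left (pow_le_one₀ hr0.le hr1.le) (ee_pos ha hb n).le
        _ = ee a b n := mul_one _
    · intro n x hx
      have hxr : |x| ≤ r := by rw [abs_le]; exact ⟨hx.1.le, hx.2.le⟩
      rw [norm_mul, norm_pow, Real.norm_eq_abs, Real.norm_eq_abs, abs_of_pos (ee_pos ha hb n)]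
      exact mul_le_mul_of_nonneg_left (pow_le_pow_left₀ (abs_nonneg x) hxr n)
        (ee_pos ha hb n).le
  have habs := abs_lt.1 htr
  exact hcont.continuousAt (Ioo_mem_nhds habs.1 habs.2)

end HyperFAux

open HyperFAux

theorem hyperF_exp_convex (a b : ℝ) (ha : 0 < a) (hb : 0 < b) :
    StrictMonoOn (fun x : ℝ => hyperF a b (a + b) (1 - Real.exp (-x))) (Set.Ioi 0) ∧
    ConvexOn ℝ (Set.Ioi 0) (fun x : ℝ => hyperF a b (a + b) (1 - Real.exp (-x))) ∧
    (deriv fun x : ℝ => hyperF a b (a + b) (1 - Real.exp (-x))) '' Set.Ioi 0 =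
      Set.Ioo (a * b / (a + b)) (Real.Gamma (a + b) / (Real.Gamma a * Real.Gamma b)) := by
  set K : ℝ → ℝ := fun x : ℝ => hyperF a b (a + b) (1 - Real.exp (-x)) with hKdef
  set g : ℝ → ℝ := fun t : ℝ => ∑' n : ℕ, ee a b n * t^n with hgdef
  -- basic facts about σ(x) = 1 - exp(-x)
  have hσd : ∀ x : ℝ, HasDerivAt (fun x : ℝ => 1 - Real.exp (-x)) (Real.exp (-x)) x := by
    intro x
    have h := ((Real.hasDerivAt_exp (-x)).comp x (hasDerivAt_neg x)).const_sub 1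
    simpa using h
  have hσmem : ∀ x : ℝ, 0 < x → (1 - Real.exp (-x)) ∈ Ioo (0:ℝ) 1 := by
    intro x hx
    have h1 : Real.exp (-x) < 1 := Real.exp_lt_one_iff.2 (by linarith)
    have h2 : 0 < Real.exp (-x) := Real.exp_pos _
    exact ⟨by linarith, by linarith⟩
  -- derivative of K
  have hKderiv : ∀ x : ℝ, 0 < x → HasDerivAt K (g (1 - Real.exp (-x))) x := by
    intro x hx
    obtain ⟨h1, h2⟩ := hσmem x hx
    set t : ℝ := 1 - Real.exp (-x) with htdef
    have habs : |t| < 1 := by rw [abs_lt]; constructor <;> linarith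
    have hF := hasDerivAt_series ha hb habs
    have hcomp := hF.comp x (hσd x)
    have hval : (∑' n : ℕ, cc a b n * ((n:ℝ) * t^(n-1))) * Real.exp (-x) = g t := by
      have hexp : Real.exp (-x) = 1 - t := by rw [htdef]; ring
      rw [hexp, hgdef]
      exact deriv_mul_eq ha hb habs
    rw [← hval]
    exact hcomp
  have hDeriv : ∀ x ∈ Ioi (0:ℝ), deriv K x = g (1 - Real.exp (-x)) :=
    fun x hx => (hKderiv x hx).deriv
  have hcontK : ContinuousOn K (Ioi 0) :=
    fun x hx => ((hKderiv x hx).differentiableAt.continuousAt).continuousWithinAt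
  have hee0 : ee a b 0 = a * b / (a + b) := ee_zero ha hb
  -- positivity & monotonicity of g along σ
  have hgpos : ∀ x : ℝ, 0 < x → 0 < g (1 - Real.exp (-x)) := by
    intro x hx
    obtain ⟨h1, h2⟩ := hσmem x hx
    exact lt_of_lt_of_le (by rw [hee0]; positivity) (gg_ge ha hb h1.le h2.le)
  have hderivmono : ∀ x₁ ∈ Ioi (0:ℝ), ∀ x₂ ∈ Ioi (0:ℝ), x₁ < x₂ →
      g (1 - Real.exp (-x₁)) < g (1 - Real.exp (-x₂)) := by
    intro x₁ hx₁ x₂ hx₂ h12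
    obtain ⟨ha1, hb1⟩ := hσmem x₁ hx₁
    obtain ⟨ha2, hb2⟩ := hσmem x₂ hx₂
    have : 1 - Real.exp (-x₁) < 1 - Real.exp (-x₂) := by
      have := Real.exp_lt_exp.2 (neg_lt_neg h12)
      linarith
    exact gg_strictMono ha hb ha1.le this hb2.le
  constructor
  · -- strict monotonicity
    apply strictMonoOn_of_deriv_pos (convex_Ioi 0) hcontK
    intro x hx
    rw [interior_Ioi] at hx
    rw [hDeriv x hx]
    exact hgpos x hx
  constructor
  · -- convexity
    apply MonotoneOn.convexOn_of_deriv (convex_Ioi 0) hcontK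
    · rw [interior_Ioi]
      exact fun x hx => (hKderiv x hx).differentiableAt.differentiableWithinAt
    · rw [interior_Ioi]
      intro x₁ hx₁ x₂ hx₂ h12
      rcases eq_or_lt_of_le h12 with rfl | hlt
      · exact le_rfl
      · rw [hDeriv x₁ hx₁, hDeriv x₂ hx₂]
        exact (hderivmono x₁ hx₁ x₂ hx₂ hlt).le
  · -- the image of the derivative
    have hLL := LL_pos ha hb
    ext y
    simp only [mem_image, mem_Ioi, mem_Ioo]
    constructor
    · rintro ⟨x, hx, rfl⟩
      rw [hDeriv x hx]
      obtain ⟨h1, h2⟩ := hσmem x hx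
      constructor
      · rw [← hee0, ← gg_zero (a := a) (b := b)]
        exact gg_strictMono ha hb le_rfl h1 h2.le
      · exact gg_lt_LL ha hb h1.le h2
    · rintro ⟨hy1, hy2⟩
      rw [← hee0] at hy1
      -- find t₀ with g t₀ < y
      have hg0 : g 0 = ee a b 0 := gg_zero
      have hcont0 : ContinuousAt g 0 := gg_continuousAt ha hb (by norm_num)
      have h1 : ∀ᶠ t in 𝓝 (0:ℝ), g t < y := by
        apply hcont0.eventually_lt_const
        rw [hg0]; exact hy1
      have h2 : ∀ᶠ t in 𝓝[>] (0:ℝ), t ∈ Ioo (0:ℝ) 1 :=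
        Ioo_mem_nhdsGT_of_mem ⟨le_refl 0, zero_lt_one⟩
      obtain ⟨t₀, ht₀y, ht₀⟩ := ((h1.filter_mono nhdsWithin_le_nhds).and h2).exists
      -- find N with partial sum > y
      have h3 : ∀ᶠ N in atTop, y < ∑ n ∈ Finset.range N, ee a b n :=
        (tendsto_sum_ee ha hb).eventually_const_lt hy2
      obtain ⟨N, hN⟩ := h3.exists
      set S : ℝ := ∑ n ∈ Finset.range N, ee a b n with hS
      -- find t₁ close to 1 with g t₁ > y
      have h4 : Tendsto (fun t : ℝ => S * t^N) (𝓝[<] (1:ℝ)) (𝓝 S) := by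
        have : Tendsto (fun t : ℝ => S * t^N) (𝓝 (1:ℝ)) (𝓝 (S * 1^N)) :=
          (continuous_const.mul (continuous_pow N)).tendsto 1
        simpa using this.mono_left nhdsWithin_le_nhds
      have h5 : ∀ᶠ t in 𝓝[<] (1:ℝ), y < S * t^N := h4.eventually_const_lt hN
      have h6 : ∀ᶠ t in 𝓝[<] (1:ℝ), t ∈ Ioo (0:ℝ) 1 :=
        Ioo_mem_nhdsLT_of_mem ⟨zero_lt_one, le_refl 1⟩
      obtain ⟨t₁, hyt₁, ht₁⟩ := (h5.and h6).exists
      have hgt₁ : y < g t₁ := lt_of_lt_of_le hyt₁ (gg_lower ha hb N ht₁.1.le ht₁.2.le)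
      -- t₀ < t₁
      have ht₀₁ : t₀ ≤ t₁ := by
        by_contra hcon
        push_neg at hcon
        have hlt := gg_strictMono ha hb ht₁.1.le hcon ht₀.2.le
        change g t₁ < g t₀ at hlt
        linarith
      -- IVT
      have hconts : ContinuousOn g (Icc t₀ t₁) := by
        intro s hs
        apply (gg_continuousAt ha hb _).continuousWithinAt
        rw [abs_lt]
        constructor
        · linarith [ht₀.1, hs.1]
        · exact lt_of_le_of_lt hs.2 ht₁.2
      obtain ⟨t, htmem, hgt⟩ := intermediate_value_Icc ht₀₁ hconts
        (⟨ht₀y.le, hgt₁.le⟩ : y ∈ Icc (g t₀) (g t₁))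
      have htIoo : t ∈ Ioo (0:ℝ) 1 :=
        ⟨lt_of_lt_of_le ht₀.1 htmem.1, lt_of_le_of_lt htmem.2 ht₁.2⟩
      refine ⟨-Real.log (1 - t), ?_, ?_⟩
      · have : Real.log (1 - t) < 0 :=
          Real.log_neg (by linarith [htIoo.2]) (by linarith [htIoo.1])
        linarith
      · have hexp : Real.exp (-(-Real.log (1 - t))) = 1 - t := by
          rw [neg_neg, Real.exp_log (by linarith [htIoo.2])]
        have hxpos : (0:ℝ) < -Real.log (1 - t) := by
          have : Real.log (1 - t) < 0 :=
            Real.log_neg (by linarith [htIoo.2]) (by linarith [htIoo.1])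
          linarith
        rw [hDeriv _ hxpos, hexp]
        simpa using hgt
end

section
/- For a, b, c > 0 and z ∈ (0,1), with u(z) = F(a-1,b;c;z), v(z) = F(a,b;c;z), u₁(z) = u(1-z), v₁(z) = v(1-z), the function φ(z) = u(z)v₁(z) + u₁(z)v(z) - v(z)v₁(z) satisfies z(1-z) φ'(z) = (1 - a - b)[(1-z)u(z)v₁(z) - z u₁(z)v(z) - (1-2z)v(z)v₁(z)]. -/
open Real Set Polynomial Filter Topology

noncomputable def hcoef (a b c : ℝ) (n : ℕ) : ℝ :=
  Polynomial.eval a (ascPochhammer ℝ n) * Polynomial.eval b (ascPochhammer ℝ n) /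
      (Polynomial.eval c (ascPochhammer ℝ n) * (n.factorial : ℝ))

lemma hyperF_eq (a b c x : ℝ) : hyperF a b c x = ∑' n : ℕ, hcoef a b c n * x ^ n := rfl

lemma poch_succ_left (x : ℝ) (n : ℕ) :
    Polynomial.eval x (ascPochhammer ℝ (n+1)) = x * Polynomial.eval (x+1) (ascPochhammer ℝ n) := by
  rw [ascPochhammer_succ_left]
  simp [eval_comp]

lemma abs_poch_le (x : ℝ) (n : ℕ) :
    |Polynomial.eval x (ascPochhammer ℝ n)| ≤ Polynomial.eval (|x|+1) (ascPochhammer ℝ n) := by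
  induction n with
  | zero => simp
  | succ n ih =>
    rw [ascPochhammer_succ_eval, ascPochhammer_succ_eval, abs_mul]
    have h1 : |x + n| ≤ |x| + 1 + n := by
      have := abs_add_le x (n : ℝ)
      have : |(n:ℝ)| = n := abs_of_nonneg (by positivity)
      calc |x + (n:ℝ)| ≤ |x| + |(n:ℝ)| := abs_add_le _ _
        _ = |x| + n := by rw [this]
        _ ≤ |x| + 1 + n := by linarith
    have hp : (0:ℝ) < Polynomial.eval (|x|+1) (ascPochhammer ℝ n) :=
      ascPochhammer_pos n _ (by positivity)
    exact mul_le_mul ih h1 (abs_nonneg _) hp.le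

lemma tendsto_affine_ratio (α β : ℝ) :
    Tendsto (fun n : ℕ => (α + n) / (β + n)) atTop (𝓝 1) := by
  have hβ : Tendsto (fun n : ℕ => β + (n:ℝ)) atTop atTop :=
    tendsto_atTop_add_const_left _ β tendsto_natCast_atTop_atTop
  have h0 : Tendsto (fun n : ℕ => (α - β) / (β + n)) atTop (𝓝 0) :=
    Tendsto.div_atTop tendsto_const_nhds hβ
  have h1 : Tendsto (fun n : ℕ => 1 + (α - β) / (β + n)) atTop (𝓝 (1 + 0)) :=
    tendsto_const_nhds.add h0
  rw [add_zero] at h1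
  refine h1.congr' ?_
  filter_upwards [hβ.eventually_gt_atTop 0] with n hn
  field_simp
  ring

lemma summable_major (p q c r : ℝ) (hp : 0 < p) (hq : 0 < q) (hc : 0 < c)
    (hr0 : 0 < r) (hr1 : r < 1) :
    Summable (fun n : ℕ => Polynomial.eval p (ascPochhammer ℝ n) *
      Polynomial.eval q (ascPochhammer ℝ n) /
      (Polynomial.eval c (ascPochhammer ℝ n) * (n.factorial : ℝ)) * ((n:ℝ)+1) * r^n) := by
  set f : ℕ → ℝ := fun n => Polynomial.eval p (ascPochhammer ℝ n) *
      Polynomial.eval q (ascPochhammer ℝ n) /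
      (Polynomial.eval c (ascPochhammer ℝ n) * (n.factorial : ℝ)) * ((n:ℝ)+1) * r^n with hf
  have hfpos : ∀ n, 0 < f n := by
    intro n
    have h1 := ascPochhammer_pos n p hp
    have h2 := ascPochhammer_pos n q hq
    have h3 := ascPochhammer_pos n c hc
    have h4 := n.factorial_pos
    have h5 : (0:ℝ) < (n.factorial : ℝ) := by exact_mod_cast h4
    have : (0:ℝ) < (n:ℝ) + 1 := by positivity
    positivity
  apply summable_of_ratio_test_tendsto_lt_one hr1
    (Filter.Eventually.of_forall fun n => (hfpos n).ne')
  have key : ∀ n : ℕ, ‖f (n+1)‖ / ‖f n‖ =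
      ((p+n)/(c+n)) * ((q+n)/(1+n)) * ((2+n)/(1+n)) * r := by
    intro n
    rw [Real.norm_of_nonneg (hfpos _).le, Real.norm_of_nonneg (hfpos _).le, hf]
    simp only [ascPochhammer_succ_eval, Nat.factorial_succ]
    have h1 := (ascPochhammer_pos n p hp).ne'
    have h2 := (ascPochhammer_pos n q hq).ne'
    have h3 := (ascPochhammer_pos n c hc).ne'
    have h5 : ((n.factorial : ℝ)) ≠ 0 := by
      exact_mod_cast n.factorial_pos.ne'
    have h6 : ((n:ℝ)+1) ≠ 0 := by positivity
    have h7 : (c + n) ≠ 0 := by positivity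
    have h8 : (1 + (n:ℝ)) ≠ 0 := by positivity
    have h9 : r ^ n ≠ 0 := by positivity
    push_cast
    field_simp
    ring
  have hlim : Tendsto (fun n : ℕ => ((p+n)/(c+n)) * ((q+n)/(1+n)) * ((2+n)/(1+n)) * r)
      atTop (𝓝 (1*1*1*r)) :=
    (((tendsto_affine_ratio p c).mul (tendsto_affine_ratio q 1)).mul
      (tendsto_affine_ratio 2 1)).mul_const r
  rw [show (1:ℝ)*1*1*r = r by ring] at hlim
  exact hlim.congr (fun n => (key n).symm)

lemma hcoef_abs_le (a b c : ℝ) (hc : 0 < c) (n : ℕ) :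
    |hcoef a b c n| ≤ Polynomial.eval (|a|+1) (ascPochhammer ℝ n) *
      Polynomial.eval (|b|+1) (ascPochhammer ℝ n) /
      (Polynomial.eval c (ascPochhammer ℝ n) * (n.factorial : ℝ)) := by
  have hC := ascPochhammer_pos n c hc
  have hF : (0:ℝ) < (n.factorial : ℝ) := by exact_mod_cast n.factorial_pos
  have hD : (0:ℝ) < Polynomial.eval c (ascPochhammer ℝ n) * (n.factorial : ℝ) := by positivity
  rw [hcoef, abs_div, abs_of_pos hD, abs_mul]
  gcongr ?_ / _
  · exact mul_le_mul (abs_poch_le a n) (abs_poch_le b n) (abs_nonneg _)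
      (ascPochhammer_pos n _ (by positivity)).le

lemma summable_hyper (a b c x : ℝ) (hc : 0 < c) (hx : |x| < 1) :
    Summable (fun n : ℕ => hcoef a b c n * x ^ n) := by
  set r : ℝ := (|x|+1)/2 with hr
  have hr0 : 0 < r := by positivity
  have hr1 : r < 1 := by rw [hr]; linarith
  have hxr : |x| ≤ r := by rw [hr]; linarith
  apply Summable.of_norm_bounded
    (summable_major (|a|+1) (|b|+1) c r (by positivity) (by positivity) hc hr0 hr1)
  intro n
  have hC := ascPochhammer_pos n c hc
  have hF : (0:ℝ) < (n.factorial : ℝ) := by exact_mod_cast n.factorial_pos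
  have hK : (0:ℝ) ≤ Polynomial.eval (|a|+1) (ascPochhammer ℝ n) *
      Polynomial.eval (|b|+1) (ascPochhammer ℝ n) /
      (Polynomial.eval c (ascPochhammer ℝ n) * (n.factorial : ℝ)) := by
    have := ascPochhammer_pos n (|a|+1) (by positivity)
    have := ascPochhammer_pos n (|b|+1) (by positivity)
    positivity
  calc ‖hcoef a b c n * x ^ n‖ = |hcoef a b c n| * |x| ^ n := by
        rw [norm_mul, Real.norm_eq_abs, Real.norm_eq_abs, abs_pow]
    _ ≤ (Polynomial.eval (|a|+1) (ascPochhammer ℝ n) *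
          Polynomial.eval (|b|+1) (ascPochhammer ℝ n) /
          (Polynomial.eval c (ascPochhammer ℝ n) * (n.factorial : ℝ))) * r ^ n := by
        exact mul_le_mul (hcoef_abs_le a b c hc n) (pow_le_pow_left₀ (abs_nonneg _) hxr n)
          (by positivity) hK
    _ ≤ _ := by
        have h1 : (1:ℝ) ≤ (n:ℝ) + 1 := by have := Nat.cast_nonneg (α:=ℝ) n; linarith
        have h2 : (0:ℝ) ≤ r ^ n := by positivity
        nlinarith [mul_nonneg hK h2]

noncomputable def majorB (a b c r : ℝ) (n : ℕ) : ℝ :=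
  Polynomial.eval (|a|+1) (ascPochhammer ℝ n) * Polynomial.eval (|b|+1) (ascPochhammer ℝ n) /
    (Polynomial.eval c (ascPochhammer ℝ n) * (n.factorial : ℝ)) * ((n:ℝ)+1) * r^n

lemma summable_majorB (a b c r : ℝ) (hc : 0 < c) (hr0 : 0 < r) (hr1 : r < 1) :
    Summable (majorB a b c r) :=
  summable_major (|a|+1) (|b|+1) c r (by positivity) (by positivity) hc hr0 hr1

lemma majorB_nonneg (a b c r : ℝ) (hc : 0 < c) (hr0 : 0 ≤ r) (n : ℕ) :
    0 ≤ majorB a b c r n := by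
  have := ascPochhammer_pos n c hc
  have hF : (0:ℝ) < (n.factorial : ℝ) := by exact_mod_cast n.factorial_pos
  have := ascPochhammer_pos n (|a|+1) (by positivity)
  have := ascPochhammer_pos n (|b|+1) (by positivity)
  have h1 : (0:ℝ) ≤ (n:ℝ)+1 := by positivity
  unfold majorB
  positivity

lemma deriv_term_bound (a b c r y : ℝ) (hc : 0 < c) (hr0 : 0 < r) (hy : |y| ≤ r) (n : ℕ) :
    ‖hcoef a b c n * ((n:ℝ) * y ^ (n-1))‖ ≤ (1/r) * majorB a b c r n := by
  have hKgen : ∀ m : ℕ, (0:ℝ) ≤ Polynomial.eval (|a|+1) (ascPochhammer ℝ m) *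
      Polynomial.eval (|b|+1) (ascPochhammer ℝ m) /
      (Polynomial.eval c (ascPochhammer ℝ m) * (m.factorial : ℝ)) := by
    intro m
    have := ascPochhammer_pos m c hc
    have hF : (0:ℝ) < (m.factorial : ℝ) := by exact_mod_cast m.factorial_pos
    have := ascPochhammer_pos m (|a|+1) (by positivity)
    have := ascPochhammer_pos m (|b|+1) (by positivity)
    positivity
  obtain _ | m := n
  · simp only [Nat.cast_zero, zero_mul, mul_zero, norm_zero]
    exact mul_nonneg (by positivity) (majorB_nonneg a b c r hc hr0.le 0)
  · have hK := hKgen (m+1)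
    set K : ℝ := Polynomial.eval (|a|+1) (ascPochhammer ℝ (m+1)) *
      Polynomial.eval (|b|+1) (ascPochhammer ℝ (m+1)) /
      (Polynomial.eval c (ascPochhammer ℝ (m+1)) * ((m+1).factorial : ℝ)) with hKdef
    have h1 : ‖hcoef a b c (m+1) * (((m+1:ℕ):ℝ) * y ^ m)‖ ≤ K * (((m+1:ℕ):ℝ)) * r ^ m := by
      rw [norm_mul, norm_mul, Real.norm_eq_abs, Real.norm_eq_abs, Real.norm_eq_abs, abs_pow]
      have hm : |((m+1:ℕ):ℝ)| = ((m+1:ℕ):ℝ) := abs_of_nonneg (by positivity)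
      rw [hm, mul_assoc]
      refine mul_le_mul (hcoef_abs_le a b c hc (m+1)) ?_ (by positivity) hK
      exact mul_le_mul_of_nonneg_left (pow_le_pow_left₀ (abs_nonneg _) hy m) (by positivity)
    calc ‖hcoef a b c (m+1) * (((m+1:ℕ):ℝ) * y ^ (m+1-1))‖
        ≤ K * (((m+1:ℕ):ℝ)) * r ^ m := h1
      _ ≤ (1/r) * majorB a b c r (m+1) := by
          have h2 : (0:ℝ) ≤ r ^ m := by positivity
          have heq : (1/r) * majorB a b c r (m+1) = K * (((m+1:ℕ):ℝ)+1) * r^m := by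
            have hrne : r ≠ 0 := hr0.ne'
            unfold majorB
            rw [pow_succ, ← hKdef]
            field_simp
          rw [heq]
          nlinarith [mul_nonneg hK h2]

lemma summable_hyper_deriv (a b c x : ℝ) (hc : 0 < c) (hx : |x| < 1) :
    Summable (fun n : ℕ => hcoef a b c n * ((n:ℝ) * x ^ (n-1))) := by
  set r : ℝ := (|x|+1)/2 with hr
  have hr0 : 0 < r := by positivity
  have hr1 : r < 1 := by rw [hr]; linarith
  have hxr : |x| ≤ r := by rw [hr]; linarith
  exact Summable.of_norm_bounded ((summable_majorB a b c r hc hr0 hr1).mul_left (1/r))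
    (deriv_term_bound a b c r x hc hr0 hxr)

lemma hyperF_hasDerivAt (a b c x : ℝ) (hc : 0 < c) (hx : |x| < 1) :
    HasDerivAt (hyperF a b c) (∑' n : ℕ, hcoef a b c n * ((n:ℝ) * x ^ (n-1))) x := by
  set r : ℝ := (|x|+1)/2 with hr
  have hr0 : 0 < r := by positivity
  have hr1 : r < 1 := by rw [hr]; linarith
  have hxr : |x| < r := by rw [hr]; linarith
  have hmem : x ∈ Set.Ioo (-r) r := by
    rw [Set.mem_Ioo]
    constructor <;> [linarith [neg_abs_le x]; linarith [le_abs_self x]]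
  have := hasDerivAt_tsum_of_isPreconnected
    (u := fun n => (1/r) * majorB a b c r n)
    (g := fun (n : ℕ) (t : ℝ) => hcoef a b c n * t ^ n)
    (g' := fun (n : ℕ) (t : ℝ) => hcoef a b c n * ((n:ℝ) * t ^ (n-1)))
    ((summable_majorB a b c r hc hr0 hr1).mul_left (1/r)) isOpen_Ioo
    (isPreconnected_Ioo) (fun n y _ => (hasDerivAt_pow n y).const_mul _)
    (fun n y hy => by
      have hyr : |y| ≤ r := by
        rw [abs_le]; rw [Set.mem_Ioo] at hy; exact ⟨hy.1.le, hy.2.le⟩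
      exact deriv_term_bound a b c r y hc hr0 hyr n)
    hmem (by
      have hx1 : |x| < 1 := hx
      exact summable_hyper a b c x hc hx1) hmem
  exact this


lemma contig1 (a b c x : ℝ) (hc : 0 < c) (hx : |x| < 1) :
    x * (∑' n : ℕ, hcoef a b c n * ((n:ℝ) * x ^ (n-1))) =
      a * (hyperF (a+1) b c x - hyperF a b c x) := by
  rw [hyperF_eq, hyperF_eq,
    ← Summable.tsum_sub (summable_hyper (a+1) b c x hc hx) (summable_hyper a b c x hc hx),
    ← tsum_mul_left, ← tsum_mul_left]
  apply tsum_congr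
  intro n
  obtain _ | m := n
  · simp [hcoef]
  · have key : a * Polynomial.eval (a+1) (ascPochhammer ℝ (m+1)) =
        Polynomial.eval a (ascPochhammer ℝ (m+1)) * (a + ((m+1:ℕ):ℝ)) := by
      rw [← poch_succ_left]
      exact ascPochhammer_succ_eval (m+1) a
    have hC := ascPochhammer_pos (m+1) c hc
    have hF : (0:ℝ) < (((m+1).factorial : ℕ) : ℝ) := by exact_mod_cast (m+1).factorial_pos
    have hDne : Polynomial.eval c (ascPochhammer ℝ (m+1)) * (((m+1).factorial : ℕ) : ℝ) ≠ 0 := by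
      positivity
    unfold hcoef
    have hxp : x * (((m+1:ℕ):ℝ) * x ^ (m+1-1)) = ((m+1:ℕ):ℝ) * x ^ (m+1) := by
      rw [Nat.add_sub_cancel, pow_succ]
      ring
    field_simp
    push_cast
    push_cast at key
    linear_combination (-(x * x^m * Polynomial.eval b (ascPochhammer ℝ (m+1)))) * key

lemma coeff_id (a b c : ℝ) (hc : 0 < c) (n : ℕ) :
    ((n+1:ℕ):ℝ) * hcoef a b c (n+1) - (c-a) * hcoef (a-1) b c (n+1)
      - (a-c) * hcoef a b c (n+1) = ((n:ℝ) + b) * hcoef a b c n := by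
  have hC := ascPochhammer_pos n c hc
  have hF : (0:ℝ) < ((n.factorial : ℕ) : ℝ) := by exact_mod_cast n.factorial_pos
  have hcn : (0:ℝ) < c + n := by positivity
  unfold hcoef
  rw [ascPochhammer_succ_eval, ascPochhammer_succ_eval (S := ℝ) n b,
    ascPochhammer_succ_eval (S := ℝ) n c, poch_succ_left (a-1) n, sub_add_cancel,
    Nat.factorial_succ]
  push_cast
  field_simp
  ring

lemma contig2 (a b c x : ℝ) (hc : 0 < c) (hx : |x| < 1) :
    x * (1 - x) * (∑' n : ℕ, hcoef a b c n * ((n:ℝ) * x ^ (n-1))) =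
      (c - a) * hyperF (a-1) b c x + (a - c + b * x) * hyperF a b c x := by
  have h1 : Summable (fun n : ℕ => hcoef a b c n * x ^ n) := summable_hyper a b c x hc hx
  have h1' : Summable (fun n : ℕ => hcoef (a-1) b c n * x ^ n) := summable_hyper _ b c x hc hx
  have hD : Summable (fun n : ℕ => hcoef a b c n * ((n:ℝ) * x ^ (n-1))) :=
    summable_hyper_deriv a b c x hc hx
  have hA : Summable (fun n : ℕ => (n:ℝ) * hcoef a b c n * x ^ n) := by
    refine (hD.mul_right x).congr fun n => ?_
    obtain _ | m := n
    · simp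
    · rw [Nat.add_sub_cancel]; push_cast; ring
  have hB : Summable (fun n : ℕ => (n:ℝ) * hcoef a b c n * x ^ (n+1)) := by
    refine (hA.mul_right x).congr fun n => ?_
    rw [pow_succ]; ring
  have hS1 : Summable (fun n : ℕ => hcoef a b c n * x ^ (n+1)) := by
    refine (h1.mul_right x).congr fun n => ?_
    rw [pow_succ]; ring
  set D : ℝ := ∑' n : ℕ, hcoef a b c n * ((n:ℝ) * x ^ (n-1)) with hDdef
  have e1 : x * D = ∑' n : ℕ, (n:ℝ) * hcoef a b c n * x ^ n := by
    rw [← tsum_mul_left]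
    refine tsum_congr fun n => ?_
    obtain _ | m := n
    · simp
    · rw [Nat.add_sub_cancel]; push_cast; ring
  have e2 : x^2 * D = ∑' n : ℕ, (n:ℝ) * hcoef a b c n * x ^ (n+1) := by
    rw [← tsum_mul_left]
    refine tsum_congr fun n => ?_
    obtain _ | m := n
    · simp
    · rw [Nat.add_sub_cancel]; push_cast; ring
  have e3 : x * hyperF a b c x = ∑' n : ℕ, hcoef a b c n * x ^ (n+1) := by
    rw [hyperF_eq, ← tsum_mul_left]
    refine tsum_congr fun n => ?_
    rw [pow_succ]; ring
  have lhs_eq : x * (1-x) * D = x * D - x^2 * D := by ring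
  rw [lhs_eq, e1, e2]
  have rhs_eq : (c - a) * hyperF (a-1) b c x + (a - c + b * x) * hyperF a b c x =
      ((c - a) * hyperF (a-1) b c x + (a - c) * hyperF a b c x) + b * (x * hyperF a b c x) := by
    ring
  rw [rhs_eq, e3, hyperF_eq, hyperF_eq]
  rw [← tsum_mul_left, ← tsum_mul_left, ← tsum_mul_left,
    ← Summable.tsum_add (h1'.mul_left _) (h1.mul_left _)]
  have hα : Summable (fun n : ℕ => (n:ℝ) * hcoef a b c n * x ^ n -
      ((c - a) * (hcoef (a-1) b c n * x ^ n) + (a - c) * (hcoef a b c n * x ^ n))) :=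
    hA.sub ((h1'.mul_left _).add (h1.mul_left _))
  have main : (∑' n : ℕ, (n:ℝ) * hcoef a b c n * x ^ n) -
      (∑' n : ℕ, ((c - a) * (hcoef (a-1) b c n * x ^ n) + (a - c) * (hcoef a b c n * x ^ n))) =
      (∑' n : ℕ, (n:ℝ) * hcoef a b c n * x ^ (n+1)) +
      ∑' n : ℕ, b * (hcoef a b c n * x ^ (n+1)) := by
    rw [← Summable.tsum_sub hA ((h1'.mul_left _).add (h1.mul_left _)),
      ← Summable.tsum_add hB (hS1.mul_left b), Summable.tsum_eq_zero_add hα]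
    have hz0 : ((0:ℕ):ℝ) * hcoef a b c 0 * x ^ 0 -
        ((c - a) * (hcoef (a-1) b c 0 * x ^ 0) + (a - c) * (hcoef a b c 0 * x ^ 0)) = 0 := by
      norm_num [hcoef]
    rw [hz0, zero_add]
    refine tsum_congr fun n => ?_
    have key := coeff_id a b c hc n
    linear_combination (x^(n+1)) * key
  linarith [main]


theorem hyperF_phi_deriv (a b c : ℝ) (ha : 0 < a) (hb : 0 < b) (hc : 0 < c)
    (z : ℝ) (hz : z ∈ Set.Ioo (0 : ℝ) 1) :
    z * (1 - z) *
        deriv (fun t => hyperF (a - 1) b c t * hyperF a b c (1 - t) +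
          hyperF (a - 1) b c (1 - t) * hyperF a b c t -
          hyperF a b c t * hyperF a b c (1 - t)) z =
      (1 - a - b) *
        ((1 - z) * hyperF (a - 1) b c z * hyperF a b c (1 - z) -
          z * hyperF (a - 1) b c (1 - z) * hyperF a b c z -
          (1 - 2 * z) * hyperF a b c z * hyperF a b c (1 - z)) := by
  obtain ⟨hz0, hz1⟩ := hz
  have hx : |z| < 1 := abs_lt.2 ⟨by linarith, hz1⟩
  have hx1 : |1 - z| < 1 := abs_lt.2 ⟨by linarith, by linarith⟩
  set Du : ℝ := ∑' n : ℕ, hcoef (a-1) b c n * ((n:ℝ) * z ^ (n-1)) with hDu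
  set Dv : ℝ := ∑' n : ℕ, hcoef a b c n * ((n:ℝ) * z ^ (n-1)) with hDv
  set Du1 : ℝ := ∑' n : ℕ, hcoef (a-1) b c n * ((n:ℝ) * (1-z) ^ (n-1)) with hDu1
  set Dv1 : ℝ := ∑' n : ℕ, hcoef a b c n * ((n:ℝ) * (1-z) ^ (n-1)) with hDv1
  have Hu : HasDerivAt (hyperF (a-1) b c) Du z := hyperF_hasDerivAt (a-1) b c z hc hx
  have Hv : HasDerivAt (hyperF a b c) Dv z := hyperF_hasDerivAt a b c z hc hx
  have Hu1 : HasDerivAt (hyperF (a-1) b c) Du1 (1-z) := hyperF_hasDerivAt (a-1) b c (1-z) hc hx1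
  have Hv1 : HasDerivAt (hyperF a b c) Dv1 (1-z) := hyperF_hasDerivAt a b c (1-z) hc hx1
  have inner : HasDerivAt (fun t : ℝ => 1 - t) (-1) z := by
    simpa using (hasDerivAt_id z).const_sub 1
  have Hcu : HasDerivAt (fun t : ℝ => hyperF (a-1) b c (1-t)) (Du1 * (-1)) z :=
    HasDerivAt.comp z Hu1 inner
  have Hcv : HasDerivAt (fun t : ℝ => hyperF a b c (1-t)) (Dv1 * (-1)) z :=
    HasDerivAt.comp z Hv1 inner
  have Hφ := ((Hu.mul Hcv).add (Hcu.mul Hv)).sub (Hv.mul Hcv)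
  rw [show deriv (fun t => hyperF (a - 1) b c t * hyperF a b c (1 - t) +
          hyperF (a - 1) b c (1 - t) * hyperF a b c t -
          hyperF a b c t * hyperF a b c (1 - t)) z = _ from Hφ.deriv]
  have h1 : z * Du = (a-1) * (hyperF a b c z - hyperF (a-1) b c z) := by
    have := contig1 (a-1) b c z hc hx
    rwa [sub_add_cancel] at this
  have h2 : (1-z) * Du1 = (a-1) * (hyperF a b c (1-z) - hyperF (a-1) b c (1-z)) := by
    have := contig1 (a-1) b c (1-z) hc hx1
    rwa [sub_add_cancel] at this
  have h3 : z * (1 - z) * Dv =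
      (c - a) * hyperF (a-1) b c z + (a - c + b * z) * hyperF a b c z :=
    contig2 a b c z hc hx
  have h4 : (1-z) * z * Dv1 =
      (c - a) * hyperF (a-1) b c (1-z) + (a - c + b * (1-z)) * hyperF a b c (1-z) := by
    have := contig2 a b c (1-z) hc hx1
    rwa [show (1 - (1-z)) = z by ring] at this
  linear_combination ((1-z) * hyperF a b c (1-z)) * h1 - (z * hyperF a b c z) * h2 +
    (hyperF (a-1) b c (1-z) - hyperF a b c (1-z)) * h3 +
    (hyperF a b c z - hyperF (a-1) b c z) * h4
end
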